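/- A subgroup of SL(2,ℤ) of finite index is non-elementary; in particular it contains two hyperbolic elements with disjoint fixed point sets on the boundary. -/

import Mathlib

open Matrix

abbrev SL2Z := Matrix.SpecialLinearGroup (Fin 2) ℤ

def Tm : SL2Z := ⟨!![1,1;0,1], by simp [Matrix.det_fin_two_of]⟩
def Um : SL2Z := ⟨!![1,0;1,1], by simp [Matrix.det_fin_two_of]⟩

lemma coe_T_pow (n : ℕ) : ((Tm ^ n : SL2Z) : Matrix (Fin 2) (Fin 2) ℤ) = !![1, (n:ℤ); 0, 1] := by
  induction n with
  | zero => simp [Matrix.one_fin_two]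
  | succ k ih =>
    rw [pow_succ, Matrix.SpecialLinearGroup.coe_mul, ih, Tm]
    simp [Matrix.mul_fin_two]
    ring

lemma coe_U_pow (n : ℕ) : ((Um ^ n : SL2Z) : Matrix (Fin 2) (Fin 2) ℤ) = !![1, 0; (n:ℤ), 1] := by
  induction n with
  | zero => simp [Matrix.one_fin_two]
  | succ k ih =>
    rw [pow_succ, Matrix.SpecialLinearGroup.coe_mul, ih, Um]
    simp [Matrix.mul_fin_two]

lemma exists_pow_mem' {G : Type*} [Group G] (K : Subgroup G) (hK : K.FiniteIndex) (g : G) :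
    ∃ n : ℕ, 0 < n ∧ g ^ n ∈ K := by
  haveI := hK
  refine ⟨K.normalCore.index, Nat.pos_of_ne_zero Subgroup.FiniteIndex.index_ne_zero, ?_⟩
  exact K.normalCore_le (K.normalCore.pow_index_mem g)

lemma coe_map_coe (g : SL2Z) :
    ((Matrix.SpecialLinearGroup.map (Int.castRingHom ℝ) g : Matrix.SpecialLinearGroup (Fin 2) ℝ) :
      Matrix (Fin 2) (Fin 2) ℝ) = (g : Matrix (Fin 2) (Fin 2) ℤ).map (Int.castRingHom ℝ) := by
  rw [Matrix.SpecialLinearGroup.map_apply_coe, RingHom.mapMatrix_apply]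


/-- An element of `SL(2,ℝ)` is hyperbolic if `|tr| > 2`. -/
def IsHyperbolic (g : Matrix.SpecialLinearGroup (Fin 2) ℝ) : Prop :=
  2 < |Matrix.trace (g : Matrix (Fin 2) (Fin 2) ℝ)|

/-- The fixed point set of `g ∈ SL(2,ℝ)` on the boundary `∂ℍ`, identified with the real
projective line: the projective classes of eigenvectors of `g`. -/
def boundaryFixedPoints (g : Matrix.SpecialLinearGroup (Fin 2) ℝ) :
    Set (Projectivization ℝ (Fin 2 → ℝ)) :=
  {x | ∃ (v : Fin 2 → ℝ) (hv : v ≠ 0) (c : ℝ),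
    Matrix.mulVec (g : Matrix (Fin 2) (Fin 2) ℝ) v = c • v ∧ x = Projectivization.mk ℝ v hv}

/-- A group is virtually abelian if it has an abelian subgroup of finite index.
A subgroup of `SL(2,ℝ)` is elementary if it is virtually abelian. -/
def VirtuallyAbelian (G : Type*) [Group G] : Prop :=
  ∃ H : Subgroup G, H.FiniteIndex ∧ ∀ a b : H, a * b = b * a

/-- A finite-index subgroup of `SL(2,ℤ)` is non-elementary; in particular it
contains two hyperbolic elements with disjoint boundary fixed point sets. -/
theorem finiteIndex_subgroup_SL2Z_nonelementary
    (Γ : Subgroup (Matrix.SpecialLinearGroup (Fin 2) ℤ)) (hΓ : Γ.FiniteIndex) :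
    ¬ VirtuallyAbelian Γ ∧
    ∃ g ∈ Γ, ∃ h ∈ Γ,
      IsHyperbolic (Matrix.SpecialLinearGroup.map (Int.castRingHom ℝ) g) ∧
      IsHyperbolic (Matrix.SpecialLinearGroup.map (Int.castRingHom ℝ) h) ∧
      boundaryFixedPoints (Matrix.SpecialLinearGroup.map (Int.castRingHom ℝ) g) ∩
        boundaryFixedPoints (Matrix.SpecialLinearGroup.map (Int.castRingHom ℝ) h) = ∅ := by
  obtain ⟨a, ha, hTa⟩ := exists_pow_mem' Γ hΓ Tm
  obtain ⟨b, hb, hUb⟩ := exists_pow_mem' Γ hΓ Um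
  constructor
  · rintro ⟨H, hHfi, hHab⟩
    set t : Γ := ⟨Tm ^ a, hTa⟩
    set u : Γ := ⟨Um ^ b, hUb⟩
    obtain ⟨c, hc, htc⟩ := exists_pow_mem' H hHfi t
    obtain ⟨d, hd, hud⟩ := exists_pow_mem' H hHfi u
    have hcomm : (t ^ c) * (u ^ d) = (u ^ d) * (t ^ c) := by
      have := hHab ⟨t ^ c, htc⟩ ⟨u ^ d, hud⟩
      exact Subtype.ext_iff.mp this
    have hc2 : (Tm ^ (a * c)) * (Um ^ (b * d)) = (Um ^ (b * d)) * (Tm ^ (a * c)) := by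
      have := congrArg (Subtype.val) hcomm
      simpa [t, u, ← pow_mul] using this
    have hmat := congrArg (fun g : SL2Z => (g : Matrix (Fin 2) (Fin 2) ℤ) 0 0) hc2
    simp only [Matrix.SpecialLinearGroup.coe_mul, coe_T_pow, coe_U_pow] at hmat
    rw [Matrix.mul_fin_two, Matrix.mul_fin_two] at hmat
    simp at hmat
    have : 0 < a * c := Nat.mul_pos ha hc
    have : 0 < b * d := Nat.mul_pos hb hd
    omega
  · refine ⟨Tm ^ a * Um ^ b, mul_mem hTa hUb, Um ^ b * Tm ^ a, mul_mem hUb hTa, ?_, ?_, ?_⟩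
    · unfold _root_.IsHyperbolic
      rw [coe_map_coe]
      simp only [Matrix.SpecialLinearGroup.coe_mul, coe_T_pow, coe_U_pow, Matrix.mul_fin_two]
      rw [Matrix.trace_fin_two]
      simp only [Matrix.map_apply, Matrix.of_apply, Matrix.cons_val_zero, Matrix.cons_val_one,
        Matrix.head_cons, Matrix.head_fin_const]
      have ha1 : (1:ℝ) ≤ (a:ℝ) := by exact_mod_cast ha
      have hb1 : (1:ℝ) ≤ (b:ℝ) := by exact_mod_cast hb
      simp only [eq_intCast]
      push_cast
      rw [abs_of_pos (by nlinarith)]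
      nlinarith
    · unfold _root_.IsHyperbolic
      rw [coe_map_coe]
      simp only [Matrix.SpecialLinearGroup.coe_mul, coe_T_pow, coe_U_pow, Matrix.mul_fin_two]
      rw [Matrix.trace_fin_two]
      simp only [Matrix.map_apply, Matrix.of_apply, Matrix.cons_val_zero, Matrix.cons_val_one,
        Matrix.head_cons, Matrix.head_fin_const]
      have ha1 : (1:ℝ) ≤ (a:ℝ) := by exact_mod_cast ha
      have hb1 : (1:ℝ) ≤ (b:ℝ) := by exact_mod_cast hb
      simp only [eq_intCast]
      push_cast
      rw [abs_of_pos (by nlinarith)]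
      nlinarith
    · ext x
      simp only [Set.mem_inter_iff, Set.mem_empty_iff_false, iff_false, not_and]
      rintro ⟨v, hv, c, hgv, rfl⟩ ⟨w, hw, d, hhw, hx⟩
      rw [Projectivization.mk_eq_mk_iff] at hx
      obtain ⟨s, hs⟩ := hx
      subst hs
      rw [Units.smul_def, Matrix.mulVec_smul, smul_comm] at hgv
      have hgw := smul_right_injective (Fin 2 → ℝ) (s.ne_zero) hgv
      rw [coe_map_coe, Matrix.SpecialLinearGroup.coe_mul, coe_T_pow, coe_U_pow,
        Matrix.mul_fin_two] at hgw hhw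
      have e0 := congrFun hgw 0
      have e1 := congrFun hgw 1
      have f0 := congrFun hhw 0
      have f1 := congrFun hhw 1
      simp only [Matrix.mulVec, dotProduct, Fin.sum_univ_two, Matrix.map_apply,
        Matrix.of_apply, Matrix.cons_val_zero, Matrix.cons_val_one, Matrix.head_cons,
        Matrix.head_fin_const, eq_intCast, Pi.smul_apply, smul_eq_mul] at e0 e1 f0 f1
      push_cast at e0 e1 f0 f1
      have ha1 : (1:ℝ) ≤ (a:ℝ) := by exact_mod_cast ha
      have hb1 : (1:ℝ) ≤ (b:ℝ) := by exact_mod_cast hb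
      have P1 : (a:ℝ) * w 1 ^ 2 + (a:ℝ) * (b:ℝ) * (w 0 * w 1) - (b:ℝ) * w 0 ^ 2 = 0 := by
        linear_combination w 1 * e0 - w 0 * e1
      have P2 : (a:ℝ) * w 1 ^ 2 - (a:ℝ) * (b:ℝ) * (w 0 * w 1) - (b:ℝ) * w 0 ^ 2 = 0 := by
        linear_combination w 1 * f0 - w 0 * f1
      have hab : (a:ℝ) * (b:ℝ) ≠ 0 := by positivity
      have key : w 0 * w 1 = 0 := by
        have h2 : (a:ℝ) * (b:ℝ) * (w 0 * w 1) = 0 := by linarith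
        exact (mul_eq_zero.mp h2).resolve_left hab
      apply hw
      funext i
      rcases mul_eq_zero.mp key with h0 | h1
      · have hw1 : w 1 = 0 := by
          have : (a:ℝ) * w 1 ^ 2 = 0 := by rw [h0] at P1; linarith [P1]
          have := (mul_eq_zero.mp this).resolve_left (by positivity)
          exact pow_eq_zero_iff (n := 2) (by norm_num) |>.mp this
        fin_cases i <;> simp [h0, hw1]
      · have hw0 : w 0 = 0 := by
          have : (b:ℝ) * w 0 ^ 2 = 0 := by rw [h1] at P1; linarith [P1]
          have := (mul_eq_zero.mp this).resolve_left (by positivity)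
          exact pow_eq_zero_iff (n := 2) (by norm_num) |>.mp this
        fin_cases i <;> simp [h1, hw0]
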